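/- If G is a distance critical simple graph on n ≥ 6 vertices, then every vertex of G has degree at most n − 4. -/

import Mathlib

/-- A graph is *distance critical* if for every vertex `v` there is a pair of vertices of
`G − v` whose distance in `G − v` differs from their distance in `G`
(distances are `ℕ∞`-valued, `⊤` when there is no connecting path). -/
def IsDistanceCritical {V : Type*} (G : SimpleGraph V) : Prop :=
  ∀ v : V, ∃ x y : ({v}ᶜ : Set V),
    (G.induce ({v}ᶜ : Set V)).edist x y ≠ G.edist (x : V) (y : V)

namespace DistCritAux

open SimpleGraph

variable {V : Type*}

private lemma edist_le_induce_edist (G : SimpleGraph V) (s : Set V) (x y : s) :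
    G.edist x y ≤ (G.induce s).edist x y := by
  rcases eq_or_ne ((G.induce s).edist x y) ⊤ with h | h
  · simp [h]
  · obtain ⟨p, hp⟩ := exists_walk_of_edist_ne_top h
    calc G.edist x y ≤ ((p.map (Embedding.induce s).toHom).length : ℕ∞) :=
          SimpleGraph.edist_le _
      _ = (p.length : ℕ∞) := by rw [Walk.length_map]
      _ = _ := hp

private lemma ind_edist_le_one {G : SimpleGraph V} {a : V} (p q : ({a}ᶜ : Set V))
    (h : G.Adj p q) : (G.induce ({a}ᶜ : Set V)).edist p q ≤ 1 := by
  have hadj : (G.induce ({a}ᶜ : Set V)).Adj p q := h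
  exact (edist_eq_one_iff_adj.mpr hadj).le

private lemma ind_edist_le_two {G : SimpleGraph V} {a : V} (p q : ({a}ᶜ : Set V)) (r : V)
    (hr : r ≠ a) (h1 : G.Adj p r) (h2 : G.Adj r q) :
    (G.induce ({a}ᶜ : Set V)).edist p q ≤ 2 := by
  set r' : ({a}ᶜ : Set V) := ⟨r, hr⟩
  calc (G.induce ({a}ᶜ : Set V)).edist p q
      ≤ (G.induce ({a}ᶜ : Set V)).edist p r' + (G.induce ({a}ᶜ : Set V)).edist r' q :=
        SimpleGraph.edist_triangle
    _ ≤ 1 + 1 := add_le_add (ind_edist_le_one p r' h1) (ind_edist_le_one r' q h2)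
    _ = 2 := by norm_num

private lemma edist_step (G : SimpleGraph V) {u w : V} (htop : G.edist u w ≠ ⊤)
    (hne : u ≠ w) : ∃ z, G.Adj u z ∧ G.edist z w + 1 = G.edist u w := by
  obtain ⟨p, hp⟩ := exists_walk_of_edist_ne_top htop
  cases p with
  | nil => exact absurd rfl hne
  | @cons _ z _ h1 p' =>
    refine ⟨z, h1, le_antisymm ?_ ?_⟩
    · rw [Walk.length_cons] at hp
      calc G.edist z w + 1 ≤ (p'.length : ℕ∞) + 1 :=
            add_le_add_left (SimpleGraph.edist_le _) 1
        _ = G.edist u w := by exact_mod_cast hp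
    · calc G.edist u w ≤ G.edist u z + G.edist z w := SimpleGraph.edist_triangle
        _ ≤ 1 + G.edist z w := add_le_add_left (edist_eq_one_iff_adj.mpr h1).le _
        _ = G.edist z w + 1 := add_comm _ _

private lemma enat_peel {x : ℕ∞} {n k : ℕ} (_hk : 0 < k) (h : x + k ≤ (n : ℕ∞)) :
    x ≤ ((n - k : ℕ) : ℕ∞) ∧ k ≤ n := by
  have hx : x ≠ ⊤ := by
    intro hx
    rw [hx] at h
    simp [top_le_iff] at h
  lift x to ℕ using hx with m hm
  have : m + k ≤ n := by exact_mod_cast h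
  exact ⟨by exact_mod_cast by omega, by omega⟩

private lemma induce_edist_le (G : SimpleGraph V) (a : V)
    (H : ∀ p q : ({a}ᶜ : Set V), G.Adj a p → G.Adj a q →
      (G.induce ({a}ᶜ : Set V)).edist p q ≤ 2) :
    ∀ x y : ({a}ᶜ : Set V), (G.induce ({a}ᶜ : Set V)).edist x y ≤ G.edist x y := by
  have main : ∀ n : ℕ, ∀ u w : V, ∀ (hu : u ∈ ({a}ᶜ : Set V)) (hw : w ∈ ({a}ᶜ : Set V)),
      G.edist u w ≤ (n : ℕ∞) →
      (G.induce ({a}ᶜ : Set V)).edist ⟨u, hu⟩ ⟨w, hw⟩ ≤ (n : ℕ∞) := by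
    intro n
    induction n using Nat.strong_induction_on with
    | _ n IH =>
      intro u w hu hw hxy
      rcases eq_or_ne u w with rfl | hne'
      · simp [SimpleGraph.edist_self]
      have htop : G.edist u w ≠ ⊤ := by
        intro h
        rw [h, top_le_iff] at hxy
        exact (ENat.coe_ne_top n) hxy
      obtain ⟨z, h1, hz⟩ := edist_step G htop hne'
      by_cases hza : z = a
      · subst hza
        have hwa : z ≠ w := fun h => (Set.mem_compl_singleton_iff.mp hw) h.symm
        have htop2 : G.edist z w ≠ ⊤ := by
          intro h
          rw [h, top_add] at hz
          rw [← hz, top_le_iff] at hxy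
          exact (ENat.coe_ne_top n) hxy
        obtain ⟨z2, h2, hz2⟩ := edist_step G htop2 hwa
        have hz2a : z2 ∈ ({z}ᶜ : Set V) := Set.mem_compl_singleton_iff.mpr h2.ne'
        have hH := H ⟨u, hu⟩ ⟨z2, hz2a⟩ h1.symm h2
        have hb : G.edist z2 w + 2 ≤ (n : ℕ∞) := by
          calc G.edist z2 w + 2 = (G.edist z2 w + 1) + 1 := by ring
            _ = G.edist z w + 1 := by rw [hz2]
            _ = G.edist u w := hz
            _ ≤ (n : ℕ∞) := hxy
        obtain ⟨hb1, hb2⟩ := enat_peel (n := n) (k := 2) (by norm_num) (by exact_mod_cast hb)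
        have hIH := IH (n - 2) (by omega) z2 w hz2a hw hb1
        calc (G.induce ({z}ᶜ : Set V)).edist ⟨u, hu⟩ ⟨w, hw⟩
            ≤ (G.induce ({z}ᶜ : Set V)).edist ⟨u, hu⟩ ⟨z2, hz2a⟩ +
              (G.induce ({z}ᶜ : Set V)).edist ⟨z2, hz2a⟩ ⟨w, hw⟩ :=
                SimpleGraph.edist_triangle
          _ ≤ 2 + ((n - 2 : ℕ) : ℕ∞) := add_le_add hH hIH
          _ = (n : ℕ∞) := by
              have h22 : 2 + (n - 2) = n := by omega
              exact_mod_cast congrArg (Nat.cast : ℕ → ℕ∞) h22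
      · have hza' : z ∈ ({a}ᶜ : Set V) := Set.mem_compl_singleton_iff.mpr hza
        have hxz : (G.induce ({a}ᶜ : Set V)).edist ⟨u, hu⟩ ⟨z, hza'⟩ ≤ 1 := by
          have hadj : (G.induce ({a}ᶜ : Set V)).Adj ⟨u, hu⟩ ⟨z, hza'⟩ := h1
          exact (edist_eq_one_iff_adj.mpr hadj).le
        have hb : G.edist z w + 1 ≤ (n : ℕ∞) := hz.trans_le hxy
        obtain ⟨hb1, hb2⟩ := enat_peel (n := n) (k := 1) (by norm_num) (by exact_mod_cast hb)
        have hIH := IH (n - 1) (by omega) z w hza' hw hb1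
        calc (G.induce ({a}ᶜ : Set V)).edist ⟨u, hu⟩ ⟨w, hw⟩
            ≤ (G.induce ({a}ᶜ : Set V)).edist ⟨u, hu⟩ ⟨z, hza'⟩ +
              (G.induce ({a}ᶜ : Set V)).edist ⟨z, hza'⟩ ⟨w, hw⟩ :=
                SimpleGraph.edist_triangle
          _ ≤ 1 + ((n - 1 : ℕ) : ℕ∞) := add_le_add hxz hIH
          _ = (n : ℕ∞) := by
              have h11 : 1 + (n - 1) = n := by omega
              exact_mod_cast congrArg (Nat.cast : ℕ → ℕ∞) h11
  intro x y
  rcases eq_or_ne (G.edist (x : V) y) ⊤ with h | h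
  · exact h ▸ le_top
  · obtain ⟨n, hn⟩ := WithTop.ne_top_iff_exists.mp h
    exact le_trans (main n x y x.2 y.2 hn.ge) hn.le

/-- If every pair of neighbours of `a` can be joined by a path of length at most two
avoiding `a`, then deleting `a` changes no distance, so `G` is not distance critical. -/
private lemma not_critical_aux (G : SimpleGraph V) (hG : IsDistanceCritical G) (a : V)
    (H : ∀ p q : ({a}ᶜ : Set V), G.Adj a p → G.Adj a q →
      (G.induce ({a}ᶜ : Set V)).edist p q ≤ 2) : False := by
  obtain ⟨x, y, hxy⟩ := hG a
  exact hxy (le_antisymm (induce_edist_le G a H x y) (edist_le_induce_edist G _ x y))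

end DistCritAux

open SimpleGraph DistCritAux in
theorem stmt_15 {V : Type*} [Fintype V] (G : SimpleGraph V) [DecidableRel G.Adj]
    (hn : 6 ≤ Fintype.card V) (hG : IsDistanceCritical G) :
    ∀ v : V, G.degree v ≤ Fintype.card V - 4 := by
  classical
  intro v
  by_contra hdeg
  push_neg at hdeg
  have hd3 : Fintype.card V ≤ G.degree v + 3 := by omega
  have hdlt : G.degree v < Fintype.card V := G.degree_lt_card_verts v
  -- the set of non-neighbours of `v` (other than `v`)
  set S : Finset V := (insert v (G.neighborFinset v))ᶜ with hSdef
  have hmemS : ∀ w, w ∈ S ↔ (w ≠ v ∧ ¬ G.Adj v w) := by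
    intro w
    simp [hSdef, SimpleGraph.mem_neighborFinset]
  have hTcard : (insert v (G.neighborFinset v)).card = G.degree v + 1 := by
    rw [Finset.card_insert_of_notMem (by simp), card_neighborFinset_eq_degree]
  have hTle : (insert v (G.neighborFinset v)).card ≤ Fintype.card V := Finset.card_le_univ _
  have hScard : S.card = Fintype.card V - (G.degree v + 1) := by
    rw [hSdef, Finset.card_compl, hTcard]
  have hScard2 : S.card ≤ 2 := by omega
  -- every vertex other than `v` has a neighbour outside `N(v) ∪ {v}`
  have hnbrS : ∀ u, u ≠ v → ∃ w, G.Adj u w ∧ ¬ G.Adj v w ∧ w ≠ v := by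
    intro u hu
    by_contra hcon
    push_neg at hcon
    apply not_critical_aux G hG u
    intro p q hp hq
    rcases eq_or_ne (p : V) (q : V) with hpq | hpq
    · have : p = q := Subtype.ext hpq
      rw [this]
      simp [SimpleGraph.edist_self]
    have hp' : G.Adj v (p : V) ∨ (p : V) = v := by
      by_cases h : G.Adj v (p : V)
      · exact Or.inl h
      · exact Or.inr (hcon p hp h)
    have hq' : G.Adj v (q : V) ∨ (q : V) = v := by
      by_cases h : G.Adj v (q : V)
      · exact Or.inl h
      · exact Or.inr (hcon q hq h)
    rcases hp' with hp' | hp' <;> rcases hq' with hq' | hq'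
    · exact ind_edist_le_two p q v (Ne.symm hu) hp'.symm hq'
    · exact ((ind_edist_le_one p q (by rw [hq']; exact hp'.symm)).trans (by norm_num))
    · exact ((ind_edist_le_one p q (by rw [hp']; exact hq')).trans (by norm_num))
    · exact absurd (hp'.trans hq'.symm) hpq
  -- extract the two non-neighbours w1, w2 of v; they are adjacent
  have hnontriv : Nontrivial V := Fintype.one_lt_card_iff_nontrivial.mp (by omega)
  obtain ⟨u0, hu0⟩ := exists_ne v
  obtain ⟨w1, _, hw1adj, hw1v⟩ := hnbrS u0 hu0
  obtain ⟨w2, hw12, hw2adj, hw2v⟩ := hnbrS w1 hw1v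
  have hne12 : w1 ≠ w2 := hw12.ne
  have hsub : ({w1, w2} : Finset V) ⊆ S := by
    intro s hs
    rw [Finset.mem_insert, Finset.mem_singleton] at hs
    rcases hs with rfl | rfl
    · exact (hmemS s).mpr ⟨hw1v, hw1adj⟩
    · exact (hmemS s).mpr ⟨hw2v, hw2adj⟩
  have hSeq : ({w1, w2} : Finset V) = S :=
    Finset.eq_of_subset_of_card_le hsub (by rw [Finset.card_pair hne12]; exact hScard2)
  have hSmem : ∀ w, w ≠ v → ¬ G.Adj v w → (w = w1 ∨ w = w2) := by
    intro w h1 h2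
    have hw : w ∈ S := (hmemS w).mpr ⟨h1, h2⟩
    rw [← hSeq, Finset.mem_insert, Finset.mem_singleton] at hw
    exact hw
  have hdich : ∀ u, u ≠ v → (G.Adj u w1 ∨ G.Adj u w2) := by
    intro u hu
    obtain ⟨w, h3, h2, h1⟩ := hnbrS u hu
    rcases hSmem w h1 h2 with rfl | rfl
    · exact Or.inl h3
    · exact Or.inr h3
  -- existence of common neighbours a of v,w1 (not adjacent to w2) and b of v,w2
  have hexA : ∀ wa wb : V, wa ≠ v → wb ≠ v → ¬ G.Adj v wa → ¬ G.Adj v wb → wa ≠ wb →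
      (∀ w, w ≠ v → ¬ G.Adj v w → (w = wa ∨ w = wb)) →
      ∃ c, G.Adj v c ∧ G.Adj wa c ∧ ¬ G.Adj wb c := by
    intro wa wb hwav hwbv hwaadj hwbadj hwab hmem
    by_contra hcon
    push_neg at hcon
    apply not_critical_aux G hG wa
    intro p q hp hq
    -- classify neighbours of wa: they are wb or common neighbours of v adjacent to wb
    have classify : ∀ r : V, G.Adj wa r → (r = wb ∨ G.Adj wb r) := by
      intro r hr
      have hrv : r ≠ v := by
        rintro rfl
        exact hwaadj hr.symm
      by_cases hrvadj : G.Adj v r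
      · exact Or.inr (hcon r hrvadj hr)
      · rcases hmem r hrv hrvadj with rfl | rfl
        · exact absurd rfl hr.ne'
        · exact Or.inl rfl
    rcases eq_or_ne (p : V) (q : V) with hpq | hpq
    · have : p = q := Subtype.ext hpq
      rw [this]
      simp [SimpleGraph.edist_self]
    rcases classify p hp with hp' | hp' <;> rcases classify q hq with hq' | hq'
    · exact absurd (hp'.trans hq'.symm) hpq
    · exact ((ind_edist_le_one p q (by rw [hp']; exact hq')).trans (by norm_num))
    · exact ((ind_edist_le_one p q (by rw [hq']; exact hp'.symm)).trans (by norm_num))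
    · exact ind_edist_le_two p q wb (Ne.symm hwab) hp'.symm hq'
  have hSmem' : ∀ w, w ≠ v → ¬ G.Adj v w → (w = w2 ∨ w = w1) := by
    intro w h1 h2
    exact (hSmem w h1 h2).symm
  obtain ⟨a, hav, haw1, haw2⟩ :=
    hexA w1 w2 hw1v hw2v hw1adj hw2adj hne12 hSmem
  obtain ⟨b, hbv, hbw2, hbw1⟩ :=
    hexA w2 w1 hw2v hw1v hw2adj hw1adj hne12.symm hSmem'
  -- uniqueness of common neighbours
  have huniq : ∀ (wa wb c : V), wa ≠ v → wb ≠ v → ¬ G.Adj v wa → ¬ G.Adj v wb →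
      G.Adj wa wb → (∀ w, w ≠ v → ¬ G.Adj v w → (w = wa ∨ w = wb)) →
      (∀ u, u ≠ v → (G.Adj u wa ∨ G.Adj u wb)) →
      G.Adj v c → G.Adj wa c → ¬ G.Adj wb c →
      ∀ d, G.Adj v d → G.Adj wa d → d = c := by
    intro wa wb c hwav hwbv hwaadj hwbadj hwab hmem hdich' hcv hcwa hcwb
    intro d hdv hdwa
    by_contra hdc
    apply not_critical_aux G hG c
    have hcwb' : c ≠ wb := fun h => hwbadj (h ▸ hcv)
    have hcv' : c ≠ v := hcv.ne'
    have hcwa' : c ≠ wa := hcwa.ne'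
    have classify : ∀ r : V, G.Adj c r → (r = v ∨ r = wa ∨ G.Adj v r) := by
      intro r hr
      by_cases h1 : r = v
      · exact Or.inl h1
      by_cases h2 : G.Adj v r
      · exact Or.inr (Or.inr h2)
      rcases hmem r h1 h2 with rfl | rfl
      · exact Or.inr (Or.inl rfl)
      · exact absurd hr.symm hcwb
    intro p q hp hq
    rcases eq_or_ne (p : V) (q : V) with hpq | hpq
    · have : p = q := Subtype.ext hpq
      rw [this]
      simp [SimpleGraph.edist_self]
    have key : ∀ (p q : ({c}ᶜ : Set V)), (p : V) ≠ (q : V) →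
        (p : V) = v → (q : V) = wa ∨ G.Adj v q →
        (G.induce ({c}ᶜ : Set V)).edist p q ≤ 2 := by
      intro p q hpq hpv hq'
      rcases hq' with hq' | hq'
      · -- from v to wa via d
        refine ind_edist_le_two p q d hdc ?_ ?_
        · rw [hpv]; exact hdv
        · rw [hq']; exact hdwa.symm
      · exact ((ind_edist_le_one p q (by rw [hpv]; exact hq')).trans (by norm_num))
    have key2 : ∀ (p q : ({c}ᶜ : Set V)), (p : V) ≠ (q : V) →
        (p : V) = wa → G.Adj v q → (q : V) ≠ v →
        (G.induce ({c}ᶜ : Set V)).edist p q ≤ 2 := by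
      intro p q hpq hpwa hq' hqv
      by_cases hwaq : G.Adj wa (q : V)
      · exact ((ind_edist_le_one p q (by rw [hpwa]; exact hwaq)).trans (by norm_num))
      · rcases hdich' (q : V) hqv with h | h
        · exact absurd h.symm hwaq
        · refine ind_edist_le_two p q wb (Ne.symm hcwb') ?_ h.symm
          rw [hpwa]; exact hwab
    rcases classify p hp with hp' | hp' | hp' <;> rcases classify q hq with hq' | hq' | hq'
    · exact absurd (hp'.trans hq'.symm) hpq
    · exact key p q hpq hp' (Or.inl hq')
    · exact key p q hpq hp' (Or.inr hq')
    · rw [SimpleGraph.edist_comm]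
      exact key q p (Ne.symm hpq) hq' (Or.inl hp')
    · exact absurd (hp'.trans hq'.symm) hpq
    · -- p = wa, q adjacent to v
      have hqv : (q : V) ≠ v := hq'.ne'
      exact key2 p q hpq hp' hq' hqv
    · rw [SimpleGraph.edist_comm]
      exact key q p (Ne.symm hpq) hq' (Or.inr hp')
    · rw [SimpleGraph.edist_comm]
      have hpv : (p : V) ≠ v := hp'.ne'
      exact key2 q p (Ne.symm hpq) hq' hp' hpv
    · exact ind_edist_le_two p q v (Ne.symm hcv') hp'.symm hq'
  -- wa = w1 case needs Adj w1 w2; we have hw12 : G.Adj w1 w2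
  have hdich2 : ∀ u, u ≠ v → (G.Adj u w2 ∨ G.Adj u w1) := fun u hu => (hdich u hu).symm
  have hA := huniq w1 w2 a hw1v hw2v hw1adj hw2adj hw12 hSmem hdich hav haw1 haw2
  have hB := huniq w2 w1 b hw2v hw1v hw2adj hw1adj hw12.symm hSmem' hdich2 hbv hbw2 hbw1
  -- every neighbour of v is a or b
  have hsubN : G.neighborFinset v ⊆ {a, b} := by
    intro u hu
    rw [SimpleGraph.mem_neighborFinset] at hu
    have hune : u ≠ v := hu.ne'
    rw [Finset.mem_insert, Finset.mem_singleton]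
    rcases hdich u hune with h | h
    · exact Or.inl (hA u hu h.symm)
    · exact Or.inr (hB u hu h.symm)
  have hdle : G.degree v ≤ 2 := by
    calc G.degree v = (G.neighborFinset v).card := rfl
      _ ≤ ({a, b} : Finset V).card := Finset.card_le_card hsubN
      _ ≤ 2 := (Finset.card_insert_le _ _).trans (by simp)
  omega
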